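/- Let (A, m) be a regular local Noetherian super-commutative super-ring (Ksdim(A) = sdim_K(m/m²)) such that Ā = A₀/A₁² is an integral domain, and let y₁,…,yₛ be a minimal generating set of the A₀-module A₁, where s = dim_K((m/m²)₁). Then for each 0 < t ≤ s, the products y^J with J ⊆ {1,…,s}, |J| = t, form a free Ā-basis of I_A^t/I_A^{t+1}; i.e., the canonical surjection λ_A : Λ_Ā(I_A/I_A²) → gr_{I_A}(A) is an isomorphism. -/

import Mathlib

/-- The product `z₁ ⋯ z_l` of a family of (odd) elements, in order. -/
noncomputable def oddProd {R : Type*} [Ring R] {l : ℕ} (z : Fin l → R) : R :=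
  (List.ofFn z).prod

/-- The monomial `y^J`, product of the `y i`, `i ∈ J`, in increasing order. -/
noncomputable def oddMonomial {R : Type*} [Ring R] {s : ℕ}
    (y : Fin s → R) (J : Finset (Fin s)) : R :=
  ((J.sort (· ≤ ·)).map y).prod

/-- The ideal `A₁²` of `R₀`: the pullback under `R₀ → R` of the ideal generated
by products of two odd elements. -/
def oddSquares {R₀ R : Type*} [CommRing R₀] [Ring R] [Algebra R₀ R]
    (𝒜 : ZMod 2 → Submodule R₀ R) : Ideal R₀ :=
  Ideal.comap (algebraMap R₀ R)
    (Ideal.span {x : R | ∃ a ∈ 𝒜 1, ∃ b ∈ 𝒜 1, x = a * b})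

/-- The power `I_A^t` of the super-ideal `I_A = A·A₁`, as an `R₀`-submodule:
the span of all products of at least `t` odd elements. -/
def IApow {R₀ R : Type*} [CommRing R₀] [Ring R] [Algebra R₀ R]
    (𝒜 : ZMod 2 → Submodule R₀ R) (t : ℕ) : Submodule R₀ R :=
  Submodule.span R₀ {x : R | ∃ k, t ≤ k ∧
    ∃ w : Fin k → R, (∀ i, w i ∈ 𝒜 1) ∧ x = oddProd w}

/-! ### Auxiliary lemmas -/

section Aux

variable {R₀ R : Type*} [CommRing R₀] [Ring R] [Algebra R₀ R]
variable (𝒜 : ZMod 2 → Submodule R₀ R)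

theorem odd_anticomm (hsq : ∀ a ∈ 𝒜 1, a * a = 0) {a b : R}
    (ha : a ∈ 𝒜 1) (hb : b ∈ 𝒜 1) : a * b = -(b * a) := by
  have h := hsq (a + b) (add_mem ha hb)
  rw [add_mul, mul_add, mul_add, hsq a ha, hsq b hb] at h
  have h2 : a * b + b * a = 0 := by
    have := h
    rw [zero_add, add_zero] at this
    exact this
  exact eq_neg_of_add_eq_zero_left h2

variable {s : ℕ} (y : Fin s → R)

/-- product of `y` over a list of indices -/
noncomputable def yProd (l : List (Fin s)) : R := (l.map y).prod

@[simp] theorem yProd_nil : yProd y ([] : List (Fin s)) = 1 := rfl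

@[simp] theorem yProd_cons (b : Fin s) (t : List (Fin s)) :
    yProd y (b :: t) = y b * yProd y t := by
  simp [yProd]

theorem y_mul_yProd_of_mem (hsq : ∀ a ∈ 𝒜 1, a * a = 0) (hy : ∀ i, y i ∈ 𝒜 1)
    {i : Fin s} : ∀ {l : List (Fin s)}, i ∈ l → y i * yProd y l = 0 := by
  intro l
  induction l with
  | nil => simp
  | cons b t ih =>
    intro hmem
    rcases List.mem_cons.mp hmem with h | h
    · subst h
      rw [yProd_cons, ← mul_assoc, hsq (y i) (hy i), zero_mul]
    · have hsw : y i * y b = -(y b * y i) := odd_anticomm 𝒜 hsq (hy i) (hy b)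
      rw [yProd_cons, ← mul_assoc, hsw, neg_mul, mul_assoc, ih h, mul_zero, neg_zero]

theorem y_mul_yProd_of_not_mem (hsq : ∀ a ∈ 𝒜 1, a * a = 0) (hy : ∀ i, y i ∈ 𝒜 1)
    {i : Fin s} : ∀ {l : List (Fin s)}, i ∉ l →
      y i * yProd y l = yProd y (l.orderedInsert (· ≤ ·) i) ∨
      y i * yProd y l = -(yProd y (l.orderedInsert (· ≤ ·) i)) := by
  intro l
  induction l with
  | nil => intro _; left; simp [List.orderedInsert]
  | cons b t ih =>
    intro hmem
    have hit : i ∉ t := fun h => hmem (List.mem_cons_of_mem _ h)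
    by_cases hle : i ≤ b
    · left
      simp only [List.orderedInsert, if_pos hle, yProd_cons]
    · have hsw : y i * y b = -(y b * y i) := odd_anticomm 𝒜 hsq (hy i) (hy b)
      have key : y i * yProd y (b :: t) = -(y b * (y i * yProd y t)) := by
        rw [yProd_cons, ← mul_assoc, hsw, neg_mul, mul_assoc]
      rw [List.orderedInsert, if_neg hle]
      rcases ih hit with h | h
      · right
        rw [key, h, yProd_cons]
      · left
        rw [key, h, mul_neg, neg_neg, yProd_cons]

theorem yProd_eq_zero_of_not_nodup (hsq : ∀ a ∈ 𝒜 1, a * a = 0) (hy : ∀ i, y i ∈ 𝒜 1) :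
    ∀ {l : List (Fin s)}, ¬ l.Nodup → yProd y l = 0 := by
  intro l
  induction l with
  | nil => intro h; exact absurd List.nodup_nil h
  | cons b t ih =>
    intro h
    rw [List.nodup_cons] at h
    push_neg at h
    by_cases hb : b ∈ t
    · rw [yProd_cons, y_mul_yProd_of_mem 𝒜 y hsq hy hb]
    · rw [yProd_cons, ih (h hb), mul_zero]

theorem oddMonomial_eq_yProd (J : Finset (Fin s)) :
    oddMonomial y J = yProd y (J.sort (· ≤ ·)) := rfl

theorem sort_insert_eq {i : Fin s} {J : Finset (Fin s)} (h : i ∉ J) :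
    (insert i J).sort (· ≤ ·) = (J.sort (· ≤ ·)).orderedInsert (· ≤ ·) i := by
  apply List.Perm.eq_of_pairwise' (Finset.pairwise_sort _ _)
    (List.Pairwise.orderedInsert _ _ (Finset.pairwise_sort _ _)) ?_
  have h1 : ((insert i J).sort (· ≤ ·) : Multiset (Fin s)) =
      ((i :: J.sort (· ≤ ·) : List (Fin s)) : Multiset (Fin s)) := by
    rw [Finset.sort_eq, Finset.insert_val, Multiset.ndinsert_of_notMem h,
      ← Multiset.cons_coe, Finset.sort_eq]
  have h2 : List.Perm ((insert i J).sort (· ≤ ·)) (i :: J.sort (· ≤ ·)) :=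
    Multiset.coe_eq_coe.mp h1
  exact h2.trans (List.perm_orderedInsert _ _ _).symm

/-- The set of monomials of degree `k`. -/
def monomialSet (k : ℕ) : Set R :=
  {x : R | ∃ J : Finset (Fin s), J.card = k ∧ x = oddMonomial y J}

theorem y_mul_oddMonomial (hsq : ∀ a ∈ 𝒜 1, a * a = 0) (hy : ∀ i, y i ∈ 𝒜 1)
    {i : Fin s} {J : Finset (Fin s)} (h : i ∉ J) :
    y i * oddMonomial y J = oddMonomial y (insert i J) ∨
    y i * oddMonomial y J = -(oddMonomial y (insert i J)) := by
  rw [oddMonomial_eq_yProd, oddMonomial_eq_yProd, sort_insert_eq h]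
  exact y_mul_yProd_of_not_mem 𝒜 y hsq hy (fun hc => h (Finset.mem_sort _ |>.mp hc))

theorem mul_monomial_mem (hsq : ∀ a ∈ 𝒜 1, a * a = 0) (hy : ∀ i, y i ∈ 𝒜 1)
    (hgen : Submodule.span R₀ (Set.range y) = 𝒜 1)
    {a : R} (ha : a ∈ 𝒜 1) (J : Finset (Fin s)) :
    a * oddMonomial y J ∈ Submodule.span R₀ (monomialSet y (J.card + 1)) := by
  rw [← hgen] at ha
  induction ha using Submodule.span_induction with
  | mem b hb =>
    obtain ⟨i, rfl⟩ := hb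
    by_cases hiJ : i ∈ J
    · have : y i * oddMonomial y J = 0 := by
        rw [oddMonomial_eq_yProd]
        exact y_mul_yProd_of_mem 𝒜 y hsq hy ((Finset.mem_sort _).mpr hiJ)
      rw [this]; exact Submodule.zero_mem _
    · have hcard : (insert i J).card = J.card + 1 := Finset.card_insert_of_notMem hiJ
      rcases y_mul_oddMonomial 𝒜 y hsq hy hiJ with h | h
      · rw [h]; exact Submodule.subset_span ⟨insert i J, hcard, rfl⟩
      · rw [h]; exact Submodule.neg_mem _ (Submodule.subset_span ⟨insert i J, hcard, rfl⟩)
  | zero => rw [zero_mul]; exact Submodule.zero_mem _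
  | add x z hx hz ihx ihz => rw [add_mul]; exact Submodule.add_mem _ ihx ihz
  | smul r x hx ih => rw [smul_mul_assoc]; exact Submodule.smul_mem _ r ih

theorem mul_span_mem (hsq : ∀ a ∈ 𝒜 1, a * a = 0) (hy : ∀ i, y i ∈ 𝒜 1)
    (hgen : Submodule.span R₀ (Set.range y) = 𝒜 1)
    {a : R} (ha : a ∈ 𝒜 1) {k : ℕ} {x : R}
    (hx : x ∈ Submodule.span R₀ (monomialSet y k)) :
    a * x ∈ Submodule.span R₀ (monomialSet y (k + 1)) := by
  induction hx using Submodule.span_induction with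
  | mem b hb =>
    obtain ⟨J, hJ, rfl⟩ := hb
    rw [← hJ]
    exact mul_monomial_mem 𝒜 y hsq hy hgen ha J
  | zero => rw [mul_zero]; exact Submodule.zero_mem _
  | add x z hx hz ihx ihz => rw [mul_add]; exact Submodule.add_mem _ ihx ihz
  | smul r x hx ih => rw [mul_smul_comm]; exact Submodule.smul_mem _ r ih

theorem listProd_mem_monomialSpan (hsq : ∀ a ∈ 𝒜 1, a * a = 0) (hy : ∀ i, y i ∈ 𝒜 1)
    (hgen : Submodule.span R₀ (Set.range y) = 𝒜 1) :
    ∀ (L : List R), (∀ x ∈ L, x ∈ 𝒜 1) →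
      L.prod ∈ Submodule.span R₀ (monomialSet y L.length) := by
  intro L
  induction L with
  | nil =>
    intro _
    refine Submodule.subset_span ⟨∅, by simp, ?_⟩
    simp [oddMonomial, Finset.sort_empty]
  | cons a t ih =>
    intro hmem
    rw [List.prod_cons, List.length_cons]
    exact mul_span_mem 𝒜 y hsq hy hgen (hmem a (List.mem_cons_self))
      (ih (fun x hx => hmem x (List.mem_cons_of_mem _ hx)))

theorem monomialSet_eq_empty {k : ℕ} (hk : s < k) : monomialSet y k = (∅ : Set R) := by
  ext x
  simp only [monomialSet, Set.mem_setOf_eq, Set.mem_empty_iff_false, iff_false]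
  rintro ⟨J, hJ, -⟩
  have := Finset.card_le_univ J
  rw [hJ, Fintype.card_fin] at this
  omega

theorem listProd_eq_zero_of_long (hsq : ∀ a ∈ 𝒜 1, a * a = 0) (hy : ∀ i, y i ∈ 𝒜 1)
    (hgen : Submodule.span R₀ (Set.range y) = 𝒜 1)
    (L : List R) (hL : ∀ x ∈ L, x ∈ 𝒜 1) (hlen : s < L.length) : L.prod = 0 := by
  have h := listProd_mem_monomialSpan 𝒜 y hsq hy hgen L hL
  rw [monomialSet_eq_empty y hlen, Submodule.span_empty, Submodule.mem_bot] at h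
  exact h

theorem oddProd_get (L : List R) : oddProd L.get = L.prod := by
  rw [oddProd, List.ofFn_get]

theorem listProd_mem_IApow (L : List R) (hL : ∀ x ∈ L, x ∈ 𝒜 1) {t : ℕ}
    (ht : t ≤ L.length) : L.prod ∈ IApow 𝒜 t := by
  refine Submodule.subset_span ⟨L.length, ht, L.get, fun i => hL _ (L.get_mem i), ?_⟩
  rw [oddProd_get]

theorem IApow_mul_listProd {x : R} {m : ℕ} (hx : x ∈ IApow 𝒜 m)
    (L : List R) (hL : ∀ z ∈ L, z ∈ 𝒜 1) :
    x * L.prod ∈ IApow 𝒜 (m + L.length) := by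
  induction hx using Submodule.span_induction with
  | mem b hb =>
    obtain ⟨k, hk, w, hw, rfl⟩ := hb
    have : oddProd w * L.prod = (List.ofFn w ++ L).prod := by
      rw [List.prod_append, oddProd]
    rw [this]
    refine listProd_mem_IApow 𝒜 (List.ofFn w ++ L) ?_ ?_
    · intro z hz
      rcases List.mem_append.mp hz with h | h
      · obtain ⟨i, rfl⟩ := List.mem_ofFn.mp h
        exact hw i
      · exact hL z h
    · rw [List.length_append, List.length_ofFn]
      omega
  | zero => rw [zero_mul]; exact Submodule.zero_mem _
  | add u v hu hv ihu ihv => rw [add_mul]; exact Submodule.add_mem _ ihu ihv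
  | smul r u hu ih => rw [smul_mul_assoc]; exact Submodule.smul_mem _ r ih

theorem IApow_eq_bot (hsq : ∀ a ∈ 𝒜 1, a * a = 0) (hy : ∀ i, y i ∈ 𝒜 1)
    (hgen : Submodule.span R₀ (Set.range y) = 𝒜 1) {k : ℕ} (hk : s < k) :
    IApow 𝒜 k = (⊥ : Submodule R₀ R) := by
  rw [eq_bot_iff, IApow, Submodule.span_le]
  rintro x ⟨k', hk', w, hw, rfl⟩
  have : oddProd w = 0 := by
    refine listProd_eq_zero_of_long 𝒜 y hsq hy hgen (List.ofFn w) ?_ ?_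
    · intro z hz
      obtain ⟨i, rfl⟩ := List.mem_ofFn.mp hz
      exact hw i
    · rw [List.length_ofFn]; omega
  rw [this]
  exact Submodule.zero_mem _

theorem yProd_append (l l' : List (Fin s)) :
    yProd y (l ++ l') = yProd y l * yProd y l' := by
  rw [yProd, yProd, yProd, List.map_append, List.prod_append]

theorem monomial_mul_eq_zero (hsq : ∀ a ∈ 𝒜 1, a * a = 0) (hy : ∀ i, y i ∈ 𝒜 1)
    {J J' : Finset (Fin s)} {i : Fin s} (hi : i ∈ J) (hi' : i ∈ J') :
    oddMonomial y J * oddMonomial y J' = 0 := by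
  have h1 : oddMonomial y J * oddMonomial y J' =
      yProd y (J.sort (· ≤ ·) ++ J'.sort (· ≤ ·)) := (yProd_append y _ _).symm
  rw [h1]
  refine yProd_eq_zero_of_not_nodup 𝒜 y hsq hy ?_
  intro hnd
  have hd := (List.nodup_append'.mp hnd).2.2
  exact hd ((Finset.mem_sort _).mpr hi) ((Finset.mem_sort _).mpr hi')

theorem yProd_mul_monomial (hsq : ∀ a ∈ 𝒜 1, a * a = 0) (hy : ∀ i, y i ∈ 𝒜 1)
    {J' : Finset (Fin s)} :
    ∀ (l : List (Fin s)), l.Nodup → (∀ i ∈ l, i ∉ J') →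
      yProd y l * oddMonomial y J' = oddMonomial y (l.toFinset ∪ J') ∨
      yProd y l * oddMonomial y J' = -(oddMonomial y (l.toFinset ∪ J')) := by
  intro l
  induction l with
  | nil =>
    intro _ _
    left
    simp [yProd]
  | cons b t ih =>
    intro hnd hdisj
    have hbt : b ∉ t := (List.nodup_cons.mp hnd).1
    have hnt : t.Nodup := (List.nodup_cons.mp hnd).2
    have hb' : b ∉ J' := hdisj b (List.mem_cons_self)
    have hbu : b ∉ t.toFinset ∪ J' := by
      simp only [Finset.mem_union, List.mem_toFinset]
      rintro (h | h)
      · exact hbt h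
      · exact hb' h
    have hstep : yProd y (b :: t) * oddMonomial y J' =
        y b * (yProd y t * oddMonomial y J') := by
      rw [yProd, List.map_cons, List.prod_cons, mul_assoc]; rfl
    have hins : insert b (t.toFinset ∪ J') = (b :: t).toFinset ∪ J' := by
      rw [List.toFinset_cons, Finset.insert_union]
    rcases ih hnt (fun i hi => hdisj i (List.mem_cons_of_mem _ hi)) with h | h <;>
      rcases y_mul_oddMonomial 𝒜 y hsq hy hbu with h2 | h2
    · left; rw [hstep, h, h2, hins]
    · right; rw [hstep, h, h2, hins]
    · right; rw [hstep, h, mul_neg, h2, hins]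
    · left; rw [hstep, h, mul_neg, h2, hins, neg_neg]

theorem monomial_mul_disjoint (hsq : ∀ a ∈ 𝒜 1, a * a = 0) (hy : ∀ i, y i ∈ 𝒜 1)
    {J J' : Finset (Fin s)} (h : Disjoint J J') :
    oddMonomial y J * oddMonomial y J' = oddMonomial y (J ∪ J') ∨
    oddMonomial y J * oddMonomial y J' = -(oddMonomial y (J ∪ J')) := by
  have key := yProd_mul_monomial 𝒜 y hsq hy (J.sort (· ≤ ·)) (Finset.sort_nodup _ _)
    (fun i hi => Finset.disjoint_left.mp h ((Finset.mem_sort _).mp hi))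
  rwa [Finset.sort_toFinset] at key

theorem quotient_dim_lt_of_ne_bot {B : Type*} [CommRing B] [IsDomain B]
    (J : Ideal B) (hJ : J ≠ ⊥) (n : ℕ)
    (hd : ringKrullDim B ≤ (n : WithBot ℕ∞))
    (he : (n : WithBot ℕ∞) ≤ ringKrullDim (B ⧸ J)) : False := by
  obtain ⟨p, hp⟩ : ∃ p : LTSeries (PrimeSpectrum (B ⧸ J)), n ≤ p.length := by
    by_contra hc
    push_neg at hc
    rcases isEmpty_or_nonempty (PrimeSpectrum (B ⧸ J)) with hE | hNE
    · rw [ringKrullDim, Order.krullDim_eq_bot] at he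
      exact absurd he (by simp)
    · have hn1 : 1 ≤ n := by
        have := hc (RelSeries.singleton _ (Nonempty.some hNE))
        simp at this; omega
      have hle : ringKrullDim (B ⧸ J) ≤ ((n - 1 : ℕ) : WithBot ℕ∞) := by
        rw [ringKrullDim, Order.krullDim]
        refine iSup_le fun q => ?_
        have : q.length ≤ n - 1 := by have := hc q; omega
        exact_mod_cast this
      have : (n : WithBot ℕ∞) ≤ ((n - 1 : ℕ) : WithBot ℕ∞) := le_trans he hle
      have : n ≤ n - 1 := by exact_mod_cast this
      omega
  have hmk : Function.Surjective (Ideal.Quotient.mk J) := Ideal.Quotient.mk_surjective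
  set f : PrimeSpectrum (B ⧸ J) → PrimeSpectrum B :=
    fun P => ⟨Ideal.comap (Ideal.Quotient.mk J) P.asIdeal, Ideal.IsPrime.comap _⟩ with hf
  have hfmono : StrictMono f := by
    intro P Q hPQ
    rw [← PrimeSpectrum.asIdeal_lt_asIdeal]
    refine lt_of_le_of_ne (Ideal.comap_mono hPQ.le) ?_
    intro hEq
    have : P.asIdeal = Q.asIdeal := by
      have := congrArg (Ideal.map (Ideal.Quotient.mk J)) hEq
      rwa [Ideal.map_comap_of_surjective _ hmk, Ideal.map_comap_of_surjective _ hmk] at this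
    exact absurd (PrimeSpectrum.ext this) hPQ.ne
  have hbotlt : (⟨⊥, Ideal.bot_prime⟩ : PrimeSpectrum B) < (p.map f hfmono).head := by
    rw [LTSeries.head_map, ← PrimeSpectrum.asIdeal_lt_asIdeal]
    refine bot_lt_iff_ne_bot.mpr ?_
    intro hEq
    refine hJ (eq_bot_iff.mpr ?_)
    intro x hx
    have hx' : x ∈ Ideal.comap (Ideal.Quotient.mk J) p.head.asIdeal := by
      simp only [Ideal.mem_comap, Ideal.Quotient.eq_zero_iff_mem.mpr hx]
      exact (p.head.asIdeal).zero_mem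
    rw [hf] at hEq
    simp only at hEq
    rw [hEq] at hx'
    exact hx'
  set q : LTSeries (PrimeSpectrum B) :=
    (p.map f hfmono).cons ⟨⊥, Ideal.bot_prime⟩ hbotlt with hq
  have hqlen : q.length = p.length + 1 := by
    simp [hq]
  have h1 : (q.length : WithBot ℕ∞) ≤ ringKrullDim B :=
    Order.LTSeries.length_le_krullDim q
  have h2 : (q.length : WithBot ℕ∞) ≤ (n : WithBot ℕ∞) := le_trans h1 hd
  have : q.length ≤ n := by exact_mod_cast h2
  omega

theorem torsionOf_le_oddSquares
    [IsLocalRing R₀]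
    (hinj : Function.Injective (algebraMap R₀ R))
    (hsq : ∀ a ∈ 𝒜 1, a * a = 0)
    (hdomain : IsDomain (R₀ ⧸ oddSquares 𝒜))
    (hy : ∀ i, y i ∈ 𝒜 1)
    (hgen : Submodule.span R₀ (Set.range y) = 𝒜 1)
    (n : ℕ)
    (hreg_even : ringKrullDim R₀ = (n : WithBot ℕ∞))
    (hreg_odd : sSup {u : ℕ | ∃ w : Fin u → R, (∀ i, w i ∈ 𝒜 1) ∧
      ringKrullDim (R₀ ⧸ Ideal.torsionOf R₀ R (oddProd w)) = ringKrullDim R₀} = s) :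
    Ideal.torsionOf R₀ R (oddMonomial y Finset.univ) ≤ oddSquares 𝒜 := by
  classical
  set S : Set ℕ := {u : ℕ | ∃ w : Fin u → R, (∀ i, w i ∈ 𝒜 1) ∧
      ringKrullDim (R₀ ⧸ Ideal.torsionOf R₀ R (oddProd w)) = ringKrullDim R₀} with hS
  have hnontriv : Nontrivial R₀ := inferInstance
  have hbound : ∀ u ∈ S, u ≤ s := by
    rintro u ⟨w, hw, hKd⟩
    by_contra hus
    push_neg at hus
    have hzero : oddProd w = 0 := by
      rw [oddProd]
      refine listProd_eq_zero_of_long 𝒜 y hsq hy hgen _ ?_ ?_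
      · intro z hz
        obtain ⟨i, rfl⟩ := List.mem_ofFn.mp hz
        exact hw i
      · rw [List.length_ofFn]; omega
    rw [hzero, Ideal.torsionOf_zero] at hKd
    have hsub : Subsingleton (R₀ ⧸ (⊤ : Ideal R₀)) := Ideal.Quotient.subsingleton_iff.mpr rfl
    rw [@ringKrullDim_eq_bot_of_subsingleton _ _ hsub] at hKd
    have h0 : (0 : WithBot ℕ∞) ≤ ringKrullDim R₀ := ringKrullDim_nonneg_of_nontrivial
    rw [← hKd] at h0
    simp at h0
  have h0S : (0 : ℕ) ∈ S := by
    refine ⟨Fin.elim0, fun i => i.elim0, ?_⟩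
    have h1 : oddProd (Fin.elim0 : Fin 0 → R) = 1 := by
      rw [oddProd, List.ofFn_zero, List.prod_nil]
    rw [h1]
    have hbot : Ideal.torsionOf R₀ R (1 : R) = ⊥ := by
      rw [eq_bot_iff]
      intro a ha
      rw [Ideal.mem_torsionOf_iff, Algebra.smul_def, mul_one] at ha
      have : a = 0 := hinj (by rw [ha, map_zero])
      simpa using this
    rw [hbot]
    exact ringKrullDim_eq_of_ringEquiv (RingEquiv.quotientBot R₀)
  have hsS : s ∈ S := by
    rw [← hreg_odd]
    exact Nat.sSup_mem ⟨0, h0S⟩ ⟨s, hbound⟩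
  obtain ⟨w, hw, hKd⟩ := hsS
  have hmem : oddProd w ∈ Submodule.span R₀ {oddMonomial y (Finset.univ : Finset (Fin s))} := by
    have h := listProd_mem_monomialSpan 𝒜 y hsq hy hgen (List.ofFn w) (by
      intro z hz
      obtain ⟨i, rfl⟩ := List.mem_ofFn.mp hz
      exact hw i)
    rw [List.length_ofFn] at h
    have hset : monomialSet y (s : ℕ) = {oddMonomial y (Finset.univ : Finset (Fin s))} := by
      ext x
      simp only [monomialSet, Set.mem_setOf_eq, Set.mem_singleton_iff]
      constructor
      · rintro ⟨J, hJ, rfl⟩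
        have : J = Finset.univ := by
          apply Finset.eq_univ_of_card
          rw [hJ, Fintype.card_fin]
        rw [this]
      · rintro rfl
        exact ⟨Finset.univ, by simp, rfl⟩
    rw [hset] at h
    exact h
  obtain ⟨c, hc⟩ := Submodule.mem_span_singleton.mp hmem
  set M : R := oddMonomial y (Finset.univ : Finset (Fin s)) with hM
  set N : Ideal R₀ := Ideal.torsionOf R₀ R M with hN
  have hNle : N ≤ Ideal.torsionOf R₀ R (oddProd w) := by
    intro a ha
    rw [Ideal.mem_torsionOf_iff] at ha ⊢
    rw [← hc, smul_smul, mul_comm, ← smul_smul, ha, smul_zero]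
  have hNdim : ringKrullDim (R₀ ⧸ N) = ringKrullDim R₀ := by
    refine le_antisymm (ringKrullDim_quotient_le N) ?_
    rw [← hKd]
    refine ringKrullDim_le_of_surjective (Ideal.Quotient.factor hNle) ?_
    intro z
    obtain ⟨x, rfl⟩ := Ideal.Quotient.mk_surjective z
    exact ⟨Ideal.Quotient.mk N x, Ideal.Quotient.factor_mk hNle x⟩
  have hQle : oddSquares 𝒜 ≤ N := by
    intro a ha
    rw [oddSquares, Ideal.mem_comap] at ha
    rw [hN, Ideal.mem_torsionOf_iff, Algebra.smul_def]
    have key : ∀ x ∈ Ideal.span {x : R | ∃ a ∈ 𝒜 1, ∃ b ∈ 𝒜 1, x = a * b}, x * M = 0 := by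
      intro x hx
      induction hx using Submodule.span_induction with
      | mem z hz =>
        obtain ⟨a', ha', b', hb', rfl⟩ := hz
        have hlist : (a' :: b' :: ((Finset.univ : Finset (Fin s)).sort (· ≤ ·)).map y).prod
            = a' * b' * M := by
          rw [List.prod_cons, List.prod_cons, mul_assoc]
          rfl
        have hzero :
            (a' :: b' :: ((Finset.univ : Finset (Fin s)).sort (· ≤ ·)).map y).prod = 0 := by
          refine listProd_eq_zero_of_long 𝒜 y hsq hy hgen _ ?_ ?_
          · intro z hz
            rcases List.mem_cons.mp hz with rfl | hz
            · exact ha'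
            rcases List.mem_cons.mp hz with rfl | hz
            · exact hb'
            · obtain ⟨i, _, rfl⟩ := List.mem_map.mp hz
              exact hy i
          · simp only [List.length_cons, List.length_map, Finset.length_sort,
              Finset.card_univ, Fintype.card_fin]
            omega
        rw [← hlist, hzero]
      | zero => rw [zero_mul]
      | add u v hu hv ihu ihv => rw [add_mul, ihu, ihv, add_zero]
      | smul r u hu ih => rw [smul_eq_mul, mul_assoc, ih, mul_zero]
    exact key _ ha
  haveI := hdomain
  set Jq : Ideal (R₀ ⧸ oddSquares 𝒜) := N.map (Ideal.Quotient.mk (oddSquares 𝒜)) with hJq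
  have hJqdim : ringKrullDim ((R₀ ⧸ oddSquares 𝒜) ⧸ Jq) = ringKrullDim R₀ := by
    rw [ringKrullDim_eq_of_ringEquiv (DoubleQuot.quotQuotEquivQuotOfLE hQle)]
    exact hNdim
  have hJqbot : Jq = ⊥ := by
    by_contra hne
    refine quotient_dim_lt_of_ne_bot Jq hne n ?_ ?_
    · rw [← hreg_even]
      exact ringKrullDim_quotient_le _
    · rw [hJqdim, hreg_even]
  intro x hx
  have : Ideal.Quotient.mk (oddSquares 𝒜) x ∈ Jq := Ideal.mem_map_of_mem _ hx
  rw [hJqbot, Ideal.mem_bot] at this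
  exact Ideal.Quotient.eq_zero_iff_mem.mp this

end Aux

/-- Let `(A, m)` be a regular local Noetherian
super-commutative super-ring (regularity: `Kdim R₀` equals the minimal number of
generators of `m₀` modulo `A₁²`, and the odd Krull dimension equals `s`) such
that `Ā = A₀/A₁²` is an integral domain, and let `y₁,…,yₛ` be a minimal
generating set of the `A₀`-module `A₁`.  Then for each `0 < t ≤ s` the products
`y^J`, `|J| = t`, form a free `Ā`-basis of `I_A^t/I_A^{t+1}`: they span it, and
any `R₀`-linear relation modulo `I_A^{t+1}` has all coefficients in `A₁²`
(i.e. the canonical map `λ_A : Λ_Ā(I_A/I_A²) → gr_{I_A}(A)` is an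
isomorphism). -/
theorem regular_local_gr_free_basis
    {R₀ R : Type*} [CommRing R₀] [Ring R] [Algebra R₀ R]
    (𝒜 : ZMod 2 → Submodule R₀ R) [GradedAlgebra 𝒜]
    (h0 : 𝒜 0 = 1) (hinj : Function.Injective (algebraMap R₀ R))
    (hsq : ∀ a ∈ 𝒜 1, a * a = 0)
    [IsLocalRing R₀] [IsNoetherianRing R₀] [Module.Finite R₀ (𝒜 1)]
    (hdomain : IsDomain (R₀ ⧸ oddSquares 𝒜))
    (s : ℕ) (y : Fin s → R) (hy : ∀ i, y i ∈ 𝒜 1)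
    (hgen : Submodule.span R₀ (Set.range y) = 𝒜 1)
    (hmin : ∀ (t' : ℕ) (w : Fin t' → R), (∀ i, w i ∈ 𝒜 1) →
      Submodule.span R₀ (Set.range w) = 𝒜 1 → s ≤ t')
    (hreg_even : ringKrullDim R₀ =
      (sInf {n : ℕ | ∃ x : Fin n → R₀,
        Ideal.span (Set.range x) ⊔ oddSquares 𝒜 =
          IsLocalRing.maximalIdeal R₀} : ℕ))
    (hreg_odd : sSup {u : ℕ | ∃ w : Fin u → R, (∀ i, w i ∈ 𝒜 1) ∧
      ringKrullDim (R₀ ⧸ Ideal.torsionOf R₀ R (oddProd w)) = ringKrullDim R₀}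
        = s) :
    ∀ t : ℕ, 0 < t → t ≤ s →
      (IApow 𝒜 t ≤
        Submodule.span R₀
          {x : R | ∃ J : Finset (Fin s), J.card = t ∧ x = oddMonomial y J} ⊔
        IApow 𝒜 (t + 1)) ∧
      (∀ a : Finset (Fin s) → R₀,
        (∑ J ∈ Finset.univ.filter (fun J : Finset (Fin s) => J.card = t),
            a J • oddMonomial y J) ∈ IApow 𝒜 (t + 1) →
        ∀ J : Finset (Fin s), J.card = t → a J ∈ oddSquares 𝒜) := by
  classical
  intro t ht hts
  constructor
  · -- spanning
    rw [IApow, Submodule.span_le]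
    rintro x ⟨k, hk, w, hw, rfl⟩
    by_cases hk1 : t + 1 ≤ k
    · have hx : oddProd w ∈ {x : R | ∃ k, t + 1 ≤ k ∧
          ∃ w : Fin k → R, (∀ i, w i ∈ 𝒜 1) ∧ x = oddProd w} := ⟨k, hk1, w, hw, rfl⟩
      exact Submodule.mem_sup_right (Submodule.subset_span hx)
    · have hkt : k = t := by clear hreg_odd; omega
      subst hkt
      apply Submodule.mem_sup_left
      have h := listProd_mem_monomialSpan 𝒜 y hsq hy hgen (List.ofFn w) (by
        intro z hz
        obtain ⟨i, rfl⟩ := List.mem_ofFn.mp hz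
        exact hw i)
      rw [List.length_ofFn] at h
      exact h
  · -- linear independence of the monomials
    intro a hrel J₀ hJ₀
    set Lc : List R := ((J₀ᶜ : Finset (Fin s)).sort (· ≤ ·)).map y with hLc
    have hLcodd : ∀ z ∈ Lc, z ∈ 𝒜 1 := by
      intro z hz
      obtain ⟨i, _, rfl⟩ := List.mem_map.mp hz
      exact hy i
    have hLclen : Lc.length = s - t := by
      rw [hLc, List.length_map, Finset.length_sort, Finset.card_compl, Fintype.card_fin, hJ₀]
    have hLcprod : Lc.prod = oddMonomial y (J₀ᶜ : Finset (Fin s)) := rfl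
    -- the relation multiplied by the complementary monomial vanishes
    have hzero : (∑ J ∈ Finset.univ.filter (fun J : Finset (Fin s) => J.card = t),
        a J • oddMonomial y J) * Lc.prod = 0 := by
      have h := IApow_mul_listProd 𝒜 hrel Lc hLcodd
      rw [hLclen] at h
      have hb : IApow 𝒜 (t + 1 + (s - t)) = (⊥ : Submodule R₀ R) :=
        IApow_eq_bot 𝒜 y hsq hy hgen (by clear hreg_odd; omega)
      rw [hb, Submodule.mem_bot] at h
      exact h
    -- expand the product as a sum
    rw [Finset.sum_mul] at hzero
    have hterm : ∀ J ∈ Finset.univ.filter (fun J : Finset (Fin s) => J.card = t),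
        J ≠ J₀ → a J • oddMonomial y J * Lc.prod = 0 := by
      intro J hJ hne
      rw [Finset.mem_filter] at hJ
      have hnsub : ¬ J ⊆ J₀ := by
        intro hsub
        exact hne (Finset.eq_of_subset_of_card_le hsub (by rw [hJ.2, hJ₀]))
      obtain ⟨i, hiJ, hiJ₀⟩ := Finset.not_subset.mp hnsub
      rw [hLcprod, smul_mul_assoc,
        monomial_mul_eq_zero 𝒜 y hsq hy hiJ (Finset.mem_compl.mpr hiJ₀), smul_zero]
    have hsingle : a J₀ • oddMonomial y J₀ * Lc.prod = 0 := by
      have hsum := Finset.sum_eq_single (s := Finset.univ.filter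
          (fun J : Finset (Fin s) => J.card = t))
          (f := fun J => a J • oddMonomial y J * Lc.prod) J₀ hterm
          (fun hmem => absurd (Finset.mem_filter.mpr ⟨Finset.mem_univ J₀, hJ₀⟩) hmem)
      rw [hsum] at hzero
      exact hzero
    -- identify the product with the top monomial
    have hdisj : Disjoint J₀ (J₀ᶜ : Finset (Fin s)) := disjoint_compl_right
    have huniv : J₀ ∪ (J₀ᶜ : Finset (Fin s)) = Finset.univ := Finset.union_compl J₀
    have htors : a J₀ ∈ Ideal.torsionOf R₀ R (oddMonomial y (Finset.univ : Finset (Fin s))) := by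
      rw [Ideal.mem_torsionOf_iff]
      rw [hLcprod, smul_mul_assoc] at hsingle
      rcases monomial_mul_disjoint 𝒜 y hsq hy hdisj with h | h
      · rw [h, huniv] at hsingle
        exact hsingle
      · rw [h, huniv, smul_neg, neg_eq_zero] at hsingle
        exact hsingle
    exact torsionOf_le_oddSquares 𝒜 y hinj hsq hdomain hy hgen _ hreg_even hreg_odd htors
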